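/- Let (a_k)_{k=1}^n be nonnegative reals satisfying, for constants M ≥ 0, λ ≥ 0, α ∈ (0,1), a_k ≤ M + λ (T/n)^α ∑_{j=1}^{k−1} a_j (k−j)^(α−1) for all 1 ≤ k ≤ n. Then there exists a constant C depending only on λ, T, α (not on n or M) such that max_{1≤k≤n} a_k ≤ C·M. -/

import Mathlib

open MeasureTheory Finset

private lemma grw_term (α : ℝ) (hα0 : 0 < α) (hα1 : α ≤ 1) {s : ℝ} (hs : 0 < s) (l : ℕ) :
    s ^ α * (Real.exp (-(s * ((l : ℝ) + 1))) * ((l : ℝ) + 1) ^ (α - 1)) ≤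
      ∫ x in Set.Ioc (s * l) (s * ((l : ℝ) + 1)), Real.exp (-x) * x ^ (α - 1) := by
  set a : ℝ := s * l with ha
  set b : ℝ := s * ((l : ℝ) + 1) with hb
  have ha0 : 0 ≤ a := by positivity
  have hab : a < b := by
    have : (l : ℝ) < (l : ℝ) + 1 := by linarith
    exact (mul_lt_mul_iff_right₀ hs).2 this
  set c : ℝ := Real.exp (-b) * b ^ (α - 1) with hc
  have hb0 : 0 < b := lt_of_le_of_lt ha0 hab
  have hint : IntegrableOn (fun x => Real.exp (-x) * x ^ (α - 1)) (Set.Ioc a b) :=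
    (Real.GammaIntegral_convergent hα0).mono_set
      (fun x hx => lt_of_le_of_lt ha0 hx.1)
  have hcint : IntegrableOn (fun _ : ℝ => c) (Set.Ioc a b) := integrableOn_const (by
    rw [Real.volume_Ioc]; exact ENNReal.ofReal_ne_top)
  have hpt : ∀ x ∈ Set.Ioc a b, c ≤ Real.exp (-x) * x ^ (α - 1) := by
    intro x hx
    have hx0 : 0 < x := lt_of_le_of_lt ha0 hx.1
    have h1 : Real.exp (-b) ≤ Real.exp (-x) := Real.exp_le_exp.2 (by linarith [hx.2])
    have h2 : b ^ (α - 1) ≤ x ^ (α - 1) :=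
      Real.rpow_le_rpow_of_nonpos hx0 hx.2 (by linarith)
    exact mul_le_mul h1 h2 (Real.rpow_nonneg hb0.le _) (Real.exp_pos _).le
  have key : ∫ _x in Set.Ioc a b, c ≤ ∫ x in Set.Ioc a b, Real.exp (-x) * x ^ (α - 1) :=
    setIntegral_mono_on hcint hint measurableSet_Ioc hpt
  have hconst : ∫ _x in Set.Ioc a b, c = (b - a) * c := by
    rw [setIntegral_const, measureReal_def, Real.volume_Ioc, ENNReal.toReal_ofReal (by linarith), smul_eq_mul]
  have hba : b - a = s := by rw [ha, hb]; ring
  have hsplit : b ^ (α - 1) = s ^ (α - 1) * ((l : ℝ) + 1) ^ (α - 1) :=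
    Real.mul_rpow hs.le (by positivity)
  have hss : s ^ α = s ^ (1 : ℝ) * s ^ (α - 1) := by
    rw [← Real.rpow_add hs]; norm_num
  have hLHS : s ^ α * (Real.exp (-b) * ((l : ℝ) + 1) ^ (α - 1)) = (b - a) * c := by
    rw [hba, hc, hsplit, hss, Real.rpow_one]; ring
  rw [hLHS, ← hconst]
  exact key

private lemma grw_sum (α lam' h μ : ℝ) (hα0 : 0 < α) (hα1 : α ≤ 1) (hl : 0 < lam') (hh : 0 < h)
    (hμ : 0 < μ) (hμα : μ ^ α = 2 * lam' * Real.Gamma α) (m : ℕ) :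
    lam' * h ^ α *
      ∑ l ∈ Finset.range m, Real.exp (-(μ * h * ((l : ℝ) + 1))) * ((l : ℝ) + 1) ^ (α - 1)
        ≤ 1 / 2 := by
  set s : ℝ := μ * h with hsdef
  have hs : 0 < s := by positivity
  set g : ℝ → ℝ := fun x => Real.exp (-x) * x ^ (α - 1) with hg
  have hΓ : 0 < Real.Gamma α := Real.Gamma_pos_of_pos hα0
  -- step 1: s^α * sum ≤ Γ α
  have step1 : s ^ α *
      ∑ l ∈ Finset.range m, Real.exp (-(s * ((l : ℝ) + 1))) * ((l : ℝ) + 1) ^ (α - 1)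
        ≤ Real.Gamma α := by
    rw [Finset.mul_sum]
    have h1 : ∀ l ∈ Finset.range m,
        s ^ α * (Real.exp (-(s * ((l : ℝ) + 1))) * ((l : ℝ) + 1) ^ (α - 1)) ≤
          ∫ x in Set.Ioc (s * l) (s * ((l : ℝ) + 1)), g x :=
      fun l _ => grw_term α hα0 hα1 hs l
    refine le_trans (Finset.sum_le_sum h1) ?_
    have hintIoc : ∀ (u v : ℝ), 0 ≤ u → IntegrableOn g (Set.Ioc u v) := fun u v hu =>
      (Real.GammaIntegral_convergent hα0).mono_set (fun x hx => lt_of_le_of_lt hu hx.1)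
    have hadj : ∀ l ∈ Finset.range m,
        (∫ x in Set.Ioc (s * l) (s * ((l : ℝ) + 1)), g x) =
          ∫ x in (s * l)..(s * ((l : ℝ) + 1)), g x := by
      intro l _
      rw [intervalIntegral.integral_of_le]
      nlinarith [Nat.cast_nonneg (α := ℝ) l]
    rw [Finset.sum_congr rfl hadj]
    have hsum : ∑ l ∈ Finset.range m, ∫ x in (s * l)..(s * ((l : ℝ) + 1)), g x =
        ∫ x in (s * (0 : ℕ))..(s * (m : ℕ)), g x := by
      have := intervalIntegral.sum_integral_adjacent_intervals (μ := volume) (f := g)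
        (a := fun i : ℕ => s * i) (n := m) (fun k _ => by
          rw [intervalIntegrable_iff_integrableOn_Ioc_of_le (by
            have : (k : ℝ) ≤ (k : ℝ) + 1 := by linarith
            push_cast; nlinarith)]
          exact hintIoc _ _ (by positivity))
      rw [← this]
      exact Finset.sum_congr rfl (fun l _ => by push_cast; ring_nf)
    rw [hsum]
    simp only [Nat.cast_zero, mul_zero]
    rw [intervalIntegral.integral_of_le (by positivity)]
    calc ∫ x in Set.Ioc (0 : ℝ) (s * m), g x ≤ ∫ x in Set.Ioi (0 : ℝ), g x := by
          refine setIntegral_mono_set (Real.GammaIntegral_convergent hα0) ?_ ?_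
          · filter_upwards [ae_restrict_mem measurableSet_Ioi] with x hx
            have : (0:ℝ) < x := hx
            positivity
          · exact HasSubset.Subset.eventuallyLE Set.Ioc_subset_Ioi_self
      _ = Real.Gamma α := (Real.Gamma_eq_integral hα0).symm
  -- step 2: algebra
  have hμα0 : (0:ℝ) < μ ^ α := Real.rpow_pos_of_pos hμ _
  have hfac : lam' * h ^ α = lam' * (μ ^ α)⁻¹ * s ^ α := by
    rw [hsdef, Real.mul_rpow hμ.le hh.le]
    field_simp
  rw [hfac, mul_assoc]
  calc lam' * (μ ^ α)⁻¹ * (s ^ α * ∑ l ∈ Finset.range m,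
        Real.exp (-(μ * h * ((l : ℝ) + 1))) * ((l : ℝ) + 1) ^ (α - 1))
      ≤ lam' * (μ ^ α)⁻¹ * Real.Gamma α := by
        refine mul_le_mul_of_nonneg_left ?_ (by positivity)
        exact step1
    _ = 1 / 2 := by
        rw [hμα]; field_simp

/-- Discrete Grönwall inequality with weakly singular kernel: if nonnegative `a_k` satisfy
`a_k ≤ M + λ (T/n)^α ∑_{j=1}^{k-1} a_j (k-j)^(α-1)` for `1 ≤ k ≤ n`, then
`max_{1≤k≤n} a_k ≤ C M` with `C` depending only on `λ, T, α`. -/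
theorem stmt_9 (lam T α : ℝ) (hlam : 0 ≤ lam) (hT : 0 < T) (hα : α ∈ Set.Ioo (0 : ℝ) 1) :
    ∃ C : ℝ, 0 < C ∧ ∀ n : ℕ, 1 ≤ n → ∀ M : ℝ, 0 ≤ M → ∀ a : ℕ → ℝ,
      (∀ k : ℕ, 1 ≤ k → k ≤ n → 0 ≤ a k) →
      (∀ k : ℕ, 1 ≤ k → k ≤ n →
        a k ≤ M + lam * (T / n) ^ α * ∑ j ∈ Finset.Ico 1 k, a j * ((k : ℝ) - j) ^ (α - 1)) →
      ∀ k : ℕ, 1 ≤ k → k ≤ n → a k ≤ C * M := by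
  obtain ⟨hα0, hα1⟩ := hα
  have hΓ : 0 < Real.Gamma α := Real.Gamma_pos_of_pos hα0
  set lam' : ℝ := lam + 1 with hlamdef
  have hl' : 0 < lam' := by positivity
  set μ : ℝ := (2 * lam' * Real.Gamma α) ^ (1 / α) with hμdef
  have hμ0 : 0 < μ := Real.rpow_pos_of_pos (by positivity) _
  have hμα : μ ^ α = 2 * lam' * Real.Gamma α := by
    rw [hμdef, ← Real.rpow_mul (by positivity), one_div,
      inv_mul_cancel₀ (ne_of_gt hα0), Real.rpow_one]
  refine ⟨2 * Real.exp (μ * T), by positivity, ?_⟩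
  intro n hn M hM a ha hrec
  have hn0 : (0 : ℝ) < n := by exact_mod_cast hn
  set h : ℝ := T / (n : ℝ) with hhdef
  have hh0 : 0 < h := by positivity
  set s : ℝ := μ * h with hsdef
  have hs0 : 0 < s := by positivity
  have main : ∀ k : ℕ, 1 ≤ k → k ≤ n → a k ≤ 2 * M * Real.exp (s * k) := by
    intro k
    induction k using Nat.strong_induction_on with
    | _ k IH =>
      intro hk1 hkn
      have kernel_nonneg : ∀ j ∈ Finset.Ico 1 k, (0 : ℝ) ≤ ((k : ℝ) - j) ^ (α - 1) := by
        intro j hj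
        rw [Finset.mem_Ico] at hj
        have hjk : (j : ℝ) < (k : ℝ) := by exact_mod_cast hj.2
        have : (0 : ℝ) < (k : ℝ) - j := by linarith
        positivity
      have hSa0 : 0 ≤ ∑ j ∈ Finset.Ico 1 k, a j * ((k : ℝ) - j) ^ (α - 1) := by
        refine Finset.sum_nonneg fun j hj => ?_
        have hj' := Finset.mem_Ico.1 hj
        exact mul_nonneg (ha j hj'.1 (by omega)) (kernel_nonneg j hj)
      have hsum1 : ∑ j ∈ Finset.Ico 1 k, a j * ((k : ℝ) - j) ^ (α - 1)
          ≤ ∑ j ∈ Finset.Ico 1 k, 2 * M * Real.exp (s * j) * ((k : ℝ) - j) ^ (α - 1) := by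
        refine Finset.sum_le_sum fun j hj => ?_
        have hj' := Finset.mem_Ico.1 hj
        exact mul_le_mul_of_nonneg_right (IH j (by omega) hj'.1 (by omega))
          (kernel_nonneg j hj)
      have hsum2 : ∑ j ∈ Finset.Ico 1 k, 2 * M * Real.exp (s * j) * ((k : ℝ) - j) ^ (α - 1)
          = 2 * M * Real.exp (s * k) * ∑ j ∈ Finset.Ico 1 k,
              Real.exp (-(s * ((k : ℝ) - j))) * ((k : ℝ) - j) ^ (α - 1) := by
        rw [Finset.mul_sum]
        refine Finset.sum_congr rfl fun j hj => ?_
        have he : Real.exp (s * (j : ℝ)) =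
            Real.exp (s * k) * Real.exp (-(s * ((k : ℝ) - j))) := by
          rw [← Real.exp_add]; ring_nf
        rw [he]; ring
      have hre : ∑ j ∈ Finset.Ico 1 k,
            Real.exp (-(s * ((k : ℝ) - j))) * ((k : ℝ) - j) ^ (α - 1)
          = ∑ l ∈ Finset.range (k - 1),
              Real.exp (-(s * ((l : ℝ) + 1))) * ((l : ℝ) + 1) ^ (α - 1) := by
        rw [Finset.sum_Ico_eq_sum_range]
        calc ∑ l ∈ Finset.range (k - 1),
              Real.exp (-(s * ((k : ℝ) - (1 + l : ℕ)))) * ((k : ℝ) - (1 + l : ℕ)) ^ (α - 1)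
            = ∑ l ∈ Finset.range (k - 1),
              Real.exp (-(s * ((k : ℝ) - (1 + (k - 1 - 1 - l) : ℕ)))) *
                ((k : ℝ) - (1 + (k - 1 - 1 - l) : ℕ)) ^ (α - 1) :=
              (Finset.sum_range_reflect
                (fun l => Real.exp (-(s * ((k : ℝ) - (1 + l : ℕ)))) *
                  ((k : ℝ) - (1 + l : ℕ)) ^ (α - 1)) (k - 1)).symm
          _ = _ := by
              refine Finset.sum_congr rfl fun l hl => ?_
              rw [Finset.mem_range] at hl
              have h1 : 1 + (k - 1 - 1 - l) = k - (1 + l) := by omega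
              rw [h1]
              have h2 : ((k - (1 + l) : ℕ) : ℝ) = (k : ℝ) - (1 + l : ℝ) := by
                rw [Nat.cast_sub (by omega)]; push_cast; ring
              rw [h2]
              have h3 : (k : ℝ) - ((k : ℝ) - (1 + (l : ℝ))) = (l : ℝ) + 1 := by ring
              rw [h3]
      have hgron := grw_sum α lam' h μ hα0 hα1.le hl' hh0 hμ0 hμα (k - 1)
      have hexp1 : (1 : ℝ) ≤ Real.exp (s * k) := Real.one_le_exp (by positivity)
      calc a k ≤ M + lam * h ^ α *
            ∑ j ∈ Finset.Ico 1 k, a j * ((k : ℝ) - j) ^ (α - 1) := hrec k hk1 hkn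
        _ ≤ M + lam' * h ^ α *
            ∑ j ∈ Finset.Ico 1 k, a j * ((k : ℝ) - j) ^ (α - 1) := by
            have hha : (0:ℝ) ≤ h ^ α := Real.rpow_nonneg hh0.le α
            nlinarith [mul_nonneg hha hSa0]
        _ ≤ M + lam' * h ^ α *
            ∑ j ∈ Finset.Ico 1 k, 2 * M * Real.exp (s * j) * ((k : ℝ) - j) ^ (α - 1) := by
            refine add_le_add_right (mul_le_mul_of_nonneg_left hsum1 (by positivity)) M
        _ = M + 2 * M * Real.exp (s * k) * (lam' * h ^ α *
            ∑ l ∈ Finset.range (k - 1),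
              Real.exp (-(s * ((l : ℝ) + 1))) * ((l : ℝ) + 1) ^ (α - 1)) := by
            rw [hsum2, hre]; ring
        _ ≤ M + 2 * M * Real.exp (s * k) * (1 / 2) := by
            refine add_le_add_right (mul_le_mul_of_nonneg_left ?_ (by positivity)) M
            exact hgron
        _ = M + M * Real.exp (s * k) := by ring
        _ ≤ 2 * M * Real.exp (s * k) := by nlinarith
  intro k hk1 hkn
  have hk' : (k : ℝ) ≤ n := by exact_mod_cast hkn
  have hsk : s * k ≤ μ * T := by
    rw [hsdef, hhdef]
    rw [mul_assoc, div_mul_eq_mul_div]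
    refine mul_le_mul_of_nonneg_left ?_ hμ0.le
    rw [div_le_iff₀ hn0]
    nlinarith
  calc a k ≤ 2 * M * Real.exp (s * k) := main k hk1 hkn
    _ ≤ 2 * M * Real.exp (μ * T) := by
        refine mul_le_mul_of_nonneg_left (Real.exp_le_exp.2 hsk) (by positivity)
    _ = 2 * Real.exp (μ * T) * M := by ring
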